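/- Let T be a rooted spanning tree of weighted graph G and v a leaf of T. Start with weights W(x) = value of cut x↓ for each vertex x, then for each edge e = {v, y} of G incident to v subtract 2w(e) from W(z) for every z on the path from y to the root. Then for every vertex x that is not an ancestor of v, the resulting W(x) equals the value of the cut x↓ ∪ v↓ minus the value of the cut v↓. -/
import Mathlib


open scoped Classical

/-- Descendants of `v` (including `v` itself) in the rooted tree given by `parent`. -/
def desc {V : Type*} (parent : V → V) (v : V) : Set V :=
  {x | Relation.ReflTransGen (fun a b => parent a = b) x v}

/-- Ancestors of `v` (including `v` itself) in the rooted tree given by `parent`. -/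
def anc {V : Type*} (parent : V → V) (v : V) : Set V :=
  {x | Relation.ReflTransGen (fun a b => parent a = b) v x}

/-- The children of a vertex `x` in the rooted tree given by `parent`. -/
def children {V : Type*} (parent : V → V) (x : V) : Set V :=
  {c | c ≠ x ∧ parent c = x}

/-- The (undirected) edges of the rooted tree determined by `parent`. -/
def treeAdj {V : Type*} (parent : V → V) : SimpleGraph V :=
  SimpleGraph.fromRel (fun a b => parent a = b)

/-- Total weight of edges of `G` with one endpoint in `A` and the other in `B`. -/
noncomputable def betweenW {V : Type*} [Fintype V] (G : SimpleGraph V)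
    (w : V → V → ℝ) (A B : Set V) : ℝ :=
  ∑ u : V, ∑ v : V, if G.Adj u v ∧ u ∈ A ∧ v ∈ B then w u v else 0

/-- The value of the cut `C` in the weighted graph `(G, w)`. -/
noncomputable def cutValR {V : Type*} [Fintype V] (G : SimpleGraph V)
    (w : V → V → ℝ) (C : Set V) : ℝ :=
  betweenW G w C Cᶜ

/-- Let `v` be a leaf of a rooted spanning tree of `G`. Start from the weights
`W(x) = value of cut x↓` and, for each edge `{v, y}` of `G` incident to `v`, subtract
`2 w(v, y)` from `W(z)` for every `z` on the path from `y` to the root (equivalently,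
`W(x)` loses `2 w(v, y)` for each neighbor `y ∈ x↓`). Then for every vertex `x` that is
not an ancestor of `v`, `W(x)` equals the value of the cut `x↓ ∪ v↓` minus the value of
the cut `v↓`. -/
theorem leaf_addpath_weights {V : Type*} [Fintype V]
    (G : SimpleGraph V) (w : V → V → ℝ) (hsymm : ∀ a b, w a b = w b a)
    (parent : V → V) (r : V) (hroot : parent r = r)
    (hreach : ∀ x, Relation.ReflTransGen (fun a b => parent a = b) x r)
    (hspan : treeAdj parent ≤ G)
    (v : V) (hvr : v ≠ r) (hleaf : children parent v = ∅) :
    ∀ x, x ∉ anc parent v →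
      cutValR G w (desc parent x)
          - 2 * (∑ y : V, if G.Adj v y ∧ y ∈ desc parent x then w v y else 0)
        = cutValR G w (desc parent x ∪ desc parent v) - cutValR G w (desc parent v) := by
  intro x hx
  have hpv : parent v ≠ v := by
    intro h
    have key : ∀ z, Relation.ReflTransGen (fun a b => parent a = b) v z → z = v := by
      intro z hz
      induction hz with
      | refl => rfl
      | tail _ hbc ih => subst ih; rw [← hbc, h]
    exact hvr (key r (hreach v)).symm
  have hdv : desc parent v = {v} := by
    ext z
    simp only [desc, Set.mem_setOf_eq, Set.mem_singleton_iff]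
    constructor
    · intro hz
      rcases hz.cases_tail with h | ⟨c, _, hcv⟩
      · exact h.symm
      · by_cases hcv' : c = v
        · exact absurd (hcv' ▸ hcv) hpv
        · have hc : c ∈ children parent v := ⟨hcv', hcv⟩
          rw [hleaf] at hc
          exact hc.elim
    · rintro rfl; exact .refl
  have hvx : v ∉ desc parent x := fun h => hx h
  rw [hdv]
  set D := desc parent x with hD
  simp only [cutValR, betweenW]
  have e1 : (∑ u : V, ∑ z : V, if u = v ∧ G.Adj u z ∧ z ∈ D then w u z else 0)
      = ∑ y : V, if G.Adj v y ∧ y ∈ D then w v y else 0 := by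
    rw [Finset.sum_eq_single v]
    · apply Finset.sum_congr rfl; intro z _; simp
    · intro b _ hb
      apply Finset.sum_eq_zero; intro z _
      simp [hb]
    · simp
  have e2 : (∑ u : V, ∑ z : V, if z = v ∧ G.Adj u z ∧ u ∈ D then w u z else 0)
      = ∑ y : V, if G.Adj v y ∧ y ∈ D then w v y else 0 := by
    have h1 : ∀ u : V, (∑ z : V, if z = v ∧ G.Adj u z ∧ u ∈ D then w u z else 0)
        = if G.Adj u v ∧ u ∈ D then w u v else 0 := by
      intro u
      rw [Finset.sum_eq_single v]
      · simp
      · intro b _ hb; simp [hb]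
      · simp
    rw [Finset.sum_congr rfl (fun u _ => h1 u)]
    apply Finset.sum_congr rfl
    intro y _
    rw [hsymm y v, G.adj_comm]
  have key : 2 * (∑ y : V, if G.Adj v y ∧ y ∈ D then w v y else 0)
      = (∑ u : V, ∑ z : V, if u = v ∧ G.Adj u z ∧ z ∈ D then w u z else 0)
      + (∑ u : V, ∑ z : V, if z = v ∧ G.Adj u z ∧ u ∈ D then w u z else 0) := by
    rw [e1, e2]; ring
  rw [key, sub_eq_sub_iff_sub_eq_sub]
  rw [← Finset.sum_add_distrib, ← Finset.sum_sub_distrib, ← Finset.sum_sub_distrib]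
  apply Finset.sum_congr rfl
  intro u _
  rw [← Finset.sum_add_distrib, ← Finset.sum_sub_distrib, ← Finset.sum_sub_distrib]
  apply Finset.sum_congr rfl
  intro z _
  by_cases hu : u = v <;> by_cases hz : z = v
  · rw [hu, hz]; simp [G.irrefl]
  · rw [hu]
    simp only [Set.mem_union, Set.mem_compl_iff, Set.mem_singleton_iff, hz]
    by_cases ha : G.Adj v z <;> by_cases hzD : z ∈ D <;>
      simp [ha, hzD, hz, hvx] <;> ring
  · rw [hz]
    simp only [Set.mem_union, Set.mem_compl_iff, Set.mem_singleton_iff, hu]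
    by_cases ha : G.Adj u v <;> by_cases huD' : u ∈ D <;>
      simp [ha, huD', hu, hvx] <;> ring
  · simp only [Set.mem_union, Set.mem_compl_iff, Set.mem_singleton_iff, hu, hz]
    by_cases ha : G.Adj u z <;> by_cases huD' : u ∈ D <;> by_cases hzD : z ∈ D <;>
      simp [ha, huD', hzD, hu, hz]
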